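/- Theorem 3: Let G' be the EAMP CG of an AMP CG G, S its set of selection nodes, and G'' the DAG obtained by replacing each undirected edge ε^A − ε^B of G' with ε^A → S_{ε^Aε^B} ← ε^B. Assuming G' and G'' have the same deterministic relationships, the LWF independence model of G' equals the LWF independence model of G'' conditioned on S: for all disjoint X, Y, Z ⊆ V ∪ ε, X ⊥_{G'} Y | Z (LWF) if and only if X ⊥_{G''} Y | Z ∪ S (LWF). -/

import Mathlib

/- Mixed graphs with directed and undirected edges. -/
structure MixedGraph (γ : Type*) where
  dir : γ → γ → Prop
  undir : γ → γ → Prop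
  undir_symm : ∀ a b, undir a b → undir b a

namespace MixedGraph

variable {β : Type*} (G : MixedGraph β)

/-- Two nodes are adjacent if joined by some edge. -/
def adj (a b : β) : Prop := G.dir a b ∨ G.dir b a ∨ G.undir a b

/-- The graph is simple: no loops and at most one edge between any pair. -/
def Simple : Prop :=
  (∀ a, ¬ G.dir a a) ∧ (∀ a, ¬ G.undir a a) ∧
  (∀ a b, G.dir a b → ¬ G.dir b a) ∧ (∀ a b, G.dir a b → ¬ G.undir a b)

/-- A semidirected cycle: a cycle whose first edge is directed and whose other
edges are directed or undirected (all pointing forwards). -/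
def HasSemidirectedCycle : Prop :=
  ∃ (n : ℕ) (f : Fin (n + 2) → β),
    f 0 = f (Fin.last (n + 1)) ∧ G.dir (f 0) (f 1) ∧
    ∀ i : Fin (n + 1), G.dir (f i.castSucc) (f i.succ) ∨ G.undir (f i.castSucc) (f i.succ)

/-- A chain graph: a simple graph with no semidirected cycle. -/
def IsChainGraph : Prop := G.Simple ∧ ¬ G.HasSemidirectedCycle

/-- A DAG: a chain graph with no undirected edges. -/
def IsDAG : Prop := G.IsChainGraph ∧ ∀ a b, ¬ G.undir a b

/-- Parents of a set of nodes. -/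
def pa (X : Set β) : Set β := {v | v ∉ X ∧ ∃ x ∈ X, G.dir v x}

/-- Strict ascendants of a set of nodes (strictly descending route to the set). -/
def san (W : Set β) : Set β := {v | v ∉ W ∧ ∃ w ∈ W, Relation.TransGen G.dir v w}

/-- B is a triplex node between A and C: A → B ← C, A → B − C, or A − B ← C. -/
def triplex (A B C : β) : Prop :=
  (G.dir A B ∧ G.dir C B) ∨ (G.dir A B ∧ G.undir B C) ∨ (G.undir A B ∧ G.dir C B)

/-- B is a non-triplex node between A and C. -/
def nontriplex (A B C : β) : Prop :=
  G.adj A B ∧ G.adj B C ∧ ¬ G.triplex A B C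

/-- A route: a nonempty sequence of consecutively adjacent nodes. -/
def IsRoute (l : List β) : Prop := l ≠ [] ∧ l.Chain' G.adj

/-- A path that is open given the determined set `D` (AMP path-based semantics). -/
def AMPOpenPath (D : Set β) (l : List β) : Prop :=
  G.IsRoute l ∧ l.Nodup ∧
  (∀ A B C, [A, B, C] <:+: l → G.triplex A B C → B ∈ D ∪ G.san D) ∧
  (∀ A B C, [A, B, C] <:+: l → G.nontriplex A B C → B ∈ D →
    (G.undir A B ∧ G.undir B C ∧ ∃ p ∈ G.pa {B}, p ∉ D))

/-- A route that is open given the determined set `D` (AMP route-based semantics). -/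
def AMPOpenRoute (D : Set β) (l : List β) : Prop :=
  G.IsRoute l ∧
  (∀ A B C, [A, B, C] <:+: l → G.triplex A B C → B ∈ D) ∧
  (∀ A B C, [A, B, C] <:+: l → G.nontriplex A B C → B ∉ D)

/-- AMP separation (path-based) of X and Y given determined set D. -/
def AMPSep (D X Y : Set β) : Prop :=
  ∀ (l : List β) (x y : β), x ∈ X → y ∈ Y → l.head? = some x → l.getLast? = some y →
    ¬ G.AMPOpenPath D l

/-- AMP separation (route-based) of X and Y given determined set D. -/
def AMPSepRoute (D X Y : Set β) : Prop :=
  ∀ (l : List β) (x y : β), x ∈ X → y ∈ Y → l.head? = some x → l.getLast? = some y →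
    ¬ G.AMPOpenRoute D l

/-- `s` is a collider section of the route `l`: a maximal undirected subroute of `l`
entered by arrowheads at both ends. -/
def IsColliderSection (l s : List β) : Prop :=
  s ≠ [] ∧ List.Chain' G.undir s ∧
  ∃ pre post A C, l = pre ++ s ++ post ∧
    pre.getLast? = some A ∧ post.head? = some C ∧
    (∀ b, s.head? = some b → G.dir A b) ∧ (∀ b, s.getLast? = some b → G.dir C b) ∧
    (∀ a b, pre.getLast? = some a → s.head? = some b → ¬ G.undir a b) ∧
    (∀ a b, s.getLast? = some a → post.head? = some b → ¬ G.undir a b)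

/-- `s` is a non-collider section of the route `l`: a maximal undirected subroute of `l`
not entered by arrowheads at both ends. -/
def IsNonColliderSection (l s : List β) : Prop :=
  s ≠ [] ∧ List.Chain' G.undir s ∧
  ∃ pre post, l = pre ++ s ++ post ∧
    (∀ a b, pre.getLast? = some a → s.head? = some b → ¬ G.undir a b) ∧
    (∀ a b, s.getLast? = some a → post.head? = some b → ¬ G.undir a b) ∧
    ¬ ((∃ A, pre.getLast? = some A ∧ ∀ b, s.head? = some b → G.dir A b) ∧
       (∃ C, post.head? = some C ∧ ∀ b, s.getLast? = some b → G.dir C b))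

/-- A route that is open given the determined set `D` (LWF semantics). -/
def LWFOpenRoute (D : Set β) (l : List β) : Prop :=
  G.IsRoute l ∧
  (∀ s, G.IsColliderSection l s → ∃ x ∈ s, x ∈ D) ∧
  (∀ s, G.IsNonColliderSection l s → ∀ x ∈ s, x ∉ D)

/-- LWF separation of X and Y given determined set D. -/
def LWFSep (D X Y : Set β) : Prop :=
  ∀ (l : List β) (x y : β), x ∈ X → y ∈ Y → l.head? = some x → l.getLast? = some y →
    ¬ G.LWFOpenRoute D l

/-- Closure of Z under a set `det` of deterministic relationships: `(S, a) ∈ det`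
means that `a` is a function of `S`. -/
inductive Determined (det : Set (Set β × β)) (Z : Set β) : β → Prop
  | base : ∀ a, a ∈ Z → Determined det Z a
  | step : ∀ (S : Set β) (a : β), (S, a) ∈ det → (∀ b ∈ S, Determined det Z b) →
      Determined det Z a

/-- The set D(Z) of nodes determined by Z. -/
def DSet (det : Set (Set β × β)) (Z : Set β) : Set β := {a | Determined det Z a}

end MixedGraph

section EAMP

variable {α : Type*}

/-- Directed edges of the EAMP CG: `inl` nodes are the original nodes,
`inr` nodes are the error nodes. -/
def eampDir (G : MixedGraph α) : (α ⊕ α) → (α ⊕ α) → Prop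
  | Sum.inl x, Sum.inl y => G.dir x y
  | Sum.inr x, Sum.inl y => x = y
  | _, _ => False

/-- Undirected edges of the EAMP CG: `ε^A − ε^B` for each `A − B` of G. -/
def eampUndir (G : MixedGraph α) : (α ⊕ α) → (α ⊕ α) → Prop
  | Sum.inr x, Sum.inr y => G.undir x y
  | _, _ => False

/-- The EAMP CG G' of an AMP CG G: add `ε^A → A` for each node A and replace
each undirected edge `A − B` by `ε^A − ε^B`. -/
def eamp (G : MixedGraph α) : MixedGraph (α ⊕ α) where
  dir := eampDir G
  undir := eampUndir G
  undir_symm := by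
    rintro (x | x) (y | y) h <;>
      simp only [eampUndir] at h ⊢ <;>
      first
        | exact h.elim
        | exact G.undir_symm _ _ h

/-- The parents of A in G, embedded as nodes of the EAMP CG. -/
def eampPa (G : MixedGraph α) (A : α) : Set (α ⊕ α) := {x | ∃ B, G.dir B A ∧ x = Sum.inl B}

/-- The deterministic relationships of the EAMP CG: each A is a function of
`pa_G(A) ∪ {ε^A}`, and each `ε^A` is a function of `pa_G(A) ∪ {A}`. -/
def eampDet (G : MixedGraph α) : Set (Set (α ⊕ α) × (α ⊕ α)) :=
  {p | (∃ A, p = (eampPa G A ∪ {Sum.inr A}, Sum.inl A)) ∨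
       (∃ A, p = (eampPa G A ∪ {Sum.inl A}, Sum.inr A))}

/-- Marginalize the node B out of G: add `A → C` for every pair `A → B`, `B → C`,
then delete B together with all edges it participates in. -/
def marg {β : Type*} (G : MixedGraph β) (B : β) : MixedGraph β where
  dir a c := a ≠ B ∧ c ≠ B ∧ (G.dir a c ∨ (G.dir a B ∧ G.dir B c))
  undir a c := a ≠ B ∧ c ≠ B ∧ G.undir a c
  undir_symm := by
    rintro a c ⟨h1, h2, h3⟩
    exact ⟨h2, h1, G.undir_symm _ _ h3⟩

/-- Marginalize a list of nodes out of G, one at a time. -/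
def margList {β : Type*} (G : MixedGraph β) (L : List β) : MixedGraph β := L.foldl marg G

/-- Directed edges of the DAG G'': those of G' among `V ∪ ε`, plus
`ε^A → S_{ε^Aε^B} ← ε^B` for each undirected edge `ε^A − ε^B` of G'. -/
def dagDir (G : MixedGraph α) : ((α ⊕ α) ⊕ Sym2 α) → ((α ⊕ α) ⊕ Sym2 α) → Prop
  | Sum.inl x, Sum.inl y => (eamp G).dir x y
  | Sum.inl (Sum.inr x), Sum.inr s => ∃ y, G.undir x y ∧ s = s(x, y)
  | _, _ => False

/-- The DAG G'' obtained from G' by replacing each `ε^A − ε^B` with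
`ε^A → S_{ε^Aε^B} ← ε^B`, where the selection nodes are fresh. -/
def dagOf (G : MixedGraph α) : MixedGraph ((α ⊕ α) ⊕ Sym2 α) where
  dir := dagDir G
  undir _ _ := False
  undir_symm := by intro a b h; exact h.elim

/-- The set S of selection nodes of G''. -/
def selNodes (G : MixedGraph α) : Set ((α ⊕ α) ⊕ Sym2 α) :=
  {v | ∃ x y, G.undir x y ∧ v = Sum.inr s(x, y)}

/-- The deterministic relationships of G'' (the same as those of G'). -/
def dagDet (G : MixedGraph α) : Set (Set ((α ⊕ α) ⊕ Sym2 α) × ((α ⊕ α) ⊕ Sym2 α)) :=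
  {p | ∃ q ∈ eampDet G, p = (Sum.inl '' q.1, Sum.inl q.2)}

/-- Structural characterization of EAMP CGs over `W ∪ ε`: a chain graph whose
undirected edges join only error nodes and whose error nodes have no incoming
directed edges. -/
def IsEAMPStruct (G : MixedGraph (α ⊕ α)) : Prop :=
  G.IsChainGraph ∧
  (∀ a b, G.undir a b → (∃ x, a = Sum.inr x) ∧ ∃ y, b = Sum.inr y) ∧
  (∀ a x, ¬ G.dir a (Sum.inr x))

/-- K is a connectivity component: a maximal set connected by undirected paths. -/
def IsConnComp {β : Type*} (G : MixedGraph β) (K : Set β) : Prop :=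
  ∃ a, K = {b | Relation.ReflTransGen G.undir a b}

end EAMP
section Aux
open List

variable {α : Type*} {β : Type*}

/-! ### Generic pointwise conditions -/

/-- Head of the route is not determined. -/
def Hpt (D : Set β) (l : List β) : Prop := ∀ w, l.head? = some w → w ∉ D

/-- Last node of the route is not determined. -/
def Lpt (D : Set β) (l : List β) : Prop := ∀ w, l.getLast? = some w → w ∉ D

/-- Interior nodes are determined iff they are colliders. -/
def Tpt (Dir : β → β → Prop) (D : Set β) (l : List β) : Prop :=
  ∀ A w C, [A, w, C] <:+: l → ((Dir A w ∧ Dir C w) ↔ w ∈ D)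

lemma tpt_suffix {Dir : β → β → Prop} {D : Set β} {l t : List β}
    (h : Tpt Dir D l) (hs : t <:+ l) : Tpt Dir D t :=
  fun A w C hinf => h A w C (hinf.trans hs.isInfix)

lemma tpt_infix {Dir : β → β → Prop} {D : Set β} {l t : List β}
    (h : Tpt Dir D l) (hs : t <:+: l) : Tpt Dir D t :=
  fun A w C hinf => h A w C (hinf.trans hs)

/-- Classify a one-point decomposition of a list. -/
lemma decomp_cases {l u v : List β} {w : β} (h : l = u ++ [w] ++ v) :
    l.head? = some w ∨ l.getLast? = some w ∨
      ∃ A C, u.getLast? = some A ∧ v.head? = some C ∧ [A, w, C] <:+: l := by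
  rcases u.eq_nil_or_concat with rfl | ⟨u₀, A, rfl⟩
  · left; rw [h]; rfl
  · rw [List.concat_eq_append] at h
    rcases v with _ | ⟨C, v₀⟩
    · right; left
      rw [h, List.append_nil, List.append_assoc]
      simpa using List.getLast?_concat
    · right; right
      refine ⟨A, C, by simp [List.concat_eq_append, List.getLast?_concat], rfl, ⟨u₀, v₀, ?_⟩⟩
      rw [h]; simp

/-- Turn an infix triple into a decomposition. -/
lemma triple_decomp {l : List β} {A w C : β} (h : [A, w, C] <:+: l) :
    ∃ u v, l = u ++ [w] ++ v ∧ u.getLast? = some A ∧ v.head? = some C := by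
  obtain ⟨s, t, rfl⟩ := h
  exact ⟨s ++ [A], C :: t, by simp, List.getLast?_concat, rfl⟩

/-! ### Maximal undirected runs -/

lemma extendLeft (U : β → β → Prop) (pre : List β) :
    ∀ w : β, ∃ pre' run : List β, pre = pre' ++ run ∧ List.Chain' U (run ++ [w]) ∧
      ∀ a b, pre'.getLast? = some a → (run ++ [w]).head? = some b → ¬ U a b := by
  induction pre using List.reverseRecOn with
  | nil =>
    intro w
    exact ⟨[], [], rfl, List.isChain_singleton w, by simp⟩
  | append_singleton q a ih =>
    intro w
    by_cases h : U a w
    · obtain ⟨q', r, hq, hch, hmax⟩ := ih a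
      refine ⟨q', r ++ [a], by rw [hq, List.append_assoc], ?_, ?_⟩
      · refine List.isChain_append.2 ⟨hch, List.isChain_singleton w, ?_⟩
        intro x hx y hy
        simp [List.getLast?_concat] at hx
        simp at hy
        subst hx; subst hy; exact h
      · intro x b hx hb
        cases r with
        | nil =>
          simp at hb
          subst hb
          exact hmax x a hx rfl
        | cons c r' =>
          simp at hb
          subst hb
          exact hmax x c hx rfl
    · refine ⟨q ++ [a], [], by simp, List.isChain_singleton w, ?_⟩
      intro x b hx hb
      simp [List.getLast?_concat] at hx
      simp at hb
      subst hx; subst hb; exact h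

lemma extendRight (U : β → β → Prop) (post : List β) :
    ∀ w : β, ∃ run post' : List β, post = run ++ post' ∧ List.Chain' U (w :: run) ∧
      ∀ a b, (w :: run).getLast? = some a → post'.head? = some b → ¬ U a b := by
  induction post with
  | nil =>
    intro w
    exact ⟨[], [], rfl, List.isChain_singleton w, by simp⟩
  | cons c t ih =>
    intro w
    by_cases h : U w c
    · obtain ⟨r, p', ht, hch, hmax⟩ := ih c
      refine ⟨c :: r, p', by simp [ht], List.isChain_cons_cons.2 ⟨h, hch⟩, ?_⟩
      intro x b hx hb
      exact hmax x b (by simpa [List.getLast?_cons_cons] using hx) hb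
    · refine ⟨[], c :: t, rfl, List.isChain_singleton w, ?_⟩
      intro x b hx hb
      simp at hx hb
      subst hx; subst hb; exact h

/-! ### Edge shape facts -/

section Graphs
variable (G : MixedGraph α)

lemma eampDir_to_inr (a : α ⊕ α) (e : α) : ¬ (eamp G).dir a (Sum.inr e) := by
  cases a <;> exact fun h => h

lemma eampUndir_inl_left (b : α) (x : α ⊕ α) : ¬ (eamp G).undir (Sum.inl b) x := by
  cases x <;> exact fun h => h

lemma eampUndir_inl_right (x : α ⊕ α) (b : α) : ¬ (eamp G).undir x (Sum.inl b) := by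
  cases x <;> exact fun h => h

lemma eampUndir_shape {G : MixedGraph α} {a b : α ⊕ α} (h : (eamp G).undir a b) :
    ∃ x y, a = Sum.inr x ∧ b = Sum.inr y ∧ G.undir x y := by
  cases a with
  | inl x => exact absurd h (eampUndir_inl_left G x b)
  | inr x =>
    cases b with
    | inl y => exact absurd h (eampUndir_inl_right G _ y)
    | inr y => exact ⟨x, y, rfl, rfl, h⟩

lemma dagDir_from_sel (s : Sym2 α) (w : (α ⊕ α) ⊕ Sym2 α) : ¬ (dagOf G).dir (Sum.inr s) w := by
  cases w <;> exact fun h => h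

lemma dagDir_to_eps (w : (α ⊕ α) ⊕ Sym2 α) (e : α) : ¬ (dagOf G).dir w (Sum.inl (Sum.inr e)) := by
  cases w with
  | inl x => cases x <;> exact fun h => h
  | inr s => exact fun h => h

lemma dagDir_inl_inl {G : MixedGraph α} (a b : α ⊕ α) :
    (dagOf G).dir (Sum.inl a) (Sum.inl b) ↔ (eamp G).dir a b := by
  cases a <;> cases b <;> exact Iff.rfl

lemma dagNoUndir (a b : (α ⊕ α) ⊕ Sym2 α) : ¬ (dagOf G).undir a b := fun h => h

end Graphs

/-! ### Singleton sections -/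

lemma singleton_collider (H : MixedGraph β) {l u v : List β} {w A C : β}
    (hl : l = u ++ [w] ++ v) (hA : u.getLast? = some A) (hC : v.head? = some C)
    (hdA : H.dir A w) (hdC : H.dir C w) (hmax : ∀ x, ¬ H.undir x w ∧ ¬ H.undir w x) :
    H.IsColliderSection l [w] := by
  refine ⟨by simp, List.isChain_singleton w, u, v, A, C, hl, hA, hC, ?_, ?_, ?_, ?_⟩
  · intro b hb; simp at hb; subst hb; exact hdA
  · intro b hb; simp at hb; subst hb; exact hdC
  · intro a b _ hb; simp at hb; subst hb; exact (hmax a).1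
  · intro a b ha _; simp at ha; subst ha; exact fun h => (hmax _).2 h

lemma singleton_noncollider (H : MixedGraph β) {l u v : List β} {w : β}
    (hl : l = u ++ [w] ++ v)
    (hno : ¬ ((∃ A, u.getLast? = some A ∧ H.dir A w) ∧ (∃ C, v.head? = some C ∧ H.dir C w)))
    (hmax : ∀ x, ¬ H.undir x w ∧ ¬ H.undir w x) :
    H.IsNonColliderSection l [w] := by
  refine ⟨by simp, List.isChain_singleton w, u, v, hl, ?_, ?_, ?_⟩
  · intro a b _ hb; simp at hb; subst hb; exact (hmax a).1
  · intro a b ha _; simp at ha; subst ha; exact fun h => (hmax _).2 h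
  · rintro ⟨⟨A, hA, hdA⟩, ⟨C, hC, hdC⟩⟩
    exact hno ⟨⟨A, hA, hdA w rfl⟩, ⟨C, hC, hdC w (by simp)⟩⟩

/-! ### Shapes of sections in `dagOf G` -/

lemma collider_shape_dag {G : MixedGraph α} {l s : List ((α ⊕ α) ⊕ Sym2 α)}
    (h : (dagOf G).IsColliderSection l s) :
    ∃ w u v A C, s = [w] ∧ l = u ++ [w] ++ v ∧ u.getLast? = some A ∧ v.head? = some C ∧
      (dagOf G).dir A w ∧ (dagOf G).dir C w := by
  obtain ⟨hne, hch, u, v, A, C, hl, hA, hC, h1, h2, _, _⟩ := h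
  cases s with
  | nil => exact absurd rfl hne
  | cons w s' =>
    cases s' with
    | nil => exact ⟨w, u, v, A, C, rfl, hl, hA, hC, h1 w rfl, h2 w (by simp)⟩
    | cons x s'' => exact absurd (List.isChain_cons_cons.1 hch).1 (fun h => h)

lemma noncollider_shape_dag {G : MixedGraph α} {l s : List ((α ⊕ α) ⊕ Sym2 α)}
    (h : (dagOf G).IsNonColliderSection l s) :
    ∃ w u v, s = [w] ∧ l = u ++ [w] ++ v ∧
      ¬ ((∃ A, u.getLast? = some A ∧ (dagOf G).dir A w) ∧
         (∃ C, v.head? = some C ∧ (dagOf G).dir C w)) := by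
  obtain ⟨hne, hch, u, v, hl, _, _, hno⟩ := h
  cases s with
  | nil => exact absurd rfl hne
  | cons w s' =>
    cases s' with
    | nil =>
      refine ⟨w, u, v, rfl, hl, ?_⟩
      rintro ⟨⟨A, hA, hdA⟩, ⟨C, hC, hdC⟩⟩
      exact hno ⟨⟨A, hA, fun b hb => by simp at hb; subst hb; exact hdA⟩,
                 ⟨C, hC, fun b hb => by simp at hb; subst hb; exact hdC⟩⟩
    | cons x s'' => exact absurd (List.isChain_cons_cons.1 hch).1 (fun h => h)

/-! ### Shapes of sections in `eamp G` -/

lemma collider_shape_eamp {G : MixedGraph α} {l s : List (α ⊕ α)}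
    (h : (eamp G).IsColliderSection l s) :
    ∃ b u v A C, s = [Sum.inl b] ∧ l = u ++ [Sum.inl b] ++ v ∧
      u.getLast? = some A ∧ v.head? = some C ∧
      (eamp G).dir A (Sum.inl b) ∧ (eamp G).dir C (Sum.inl b) := by
  obtain ⟨hne, hch, u, v, A, C, hl, hA, hC, h1, h2, _, _⟩ := h
  cases s with
  | nil => exact absurd rfl hne
  | cons w s' =>
    have hdA : (eamp G).dir A w := h1 w rfl
    cases w with
    | inr e => exact absurd hdA (eampDir_to_inr G A e)
    | inl b =>
      cases s' with
      | nil => exact ⟨b, u, v, A, C, rfl, hl, hA, hC, hdA, h2 _ (by simp)⟩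
      | cons x s'' =>
        exact absurd (List.isChain_cons_cons.1 hch).1 (eampUndir_inl_left G b x)

/-- ε-nodes occurring on a route all of whose non-collider sections avoid `D`
are themselves outside `D`. -/
lemma eps_notin {G : MixedGraph α} {D : Set (α ⊕ α)} {l u v : List (α ⊕ α)} {e : α}
    (hnon : ∀ s, (eamp G).IsNonColliderSection l s → ∀ x ∈ s, x ∉ D)
    (hl : l = u ++ [Sum.inr e] ++ v) : Sum.inr e ∉ D := by
  obtain ⟨u', rl, hu, hchl, hmaxl⟩ := extendLeft (eamp G).undir u (Sum.inr e)
  obtain ⟨rr, v', hv, hchr, hmaxr⟩ := extendRight (eamp G).undir v (Sum.inr e)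
  have hl2 : l = u' ++ (rl ++ (Sum.inr e) :: rr) ++ v' := by
    rw [hl, hu, hv]; simp
  have hheads : ∀ b, (rl ++ (Sum.inr e) :: rr).head? = some b → (rl ++ [Sum.inr e]).head? = some b := by
    intro b hb
    cases rl with
    | nil => simpa using hb
    | cons c rl' => simpa using hb
  have hheadinr : ∀ b, (rl ++ (Sum.inr e) :: rr).head? = some b → ∃ x, b = Sum.inr x := by
    intro b hb
    cases rl with
    | nil => simp at hb; exact ⟨e, hb.symm⟩
    | cons c rl' =>
      simp at hb
      have h2 : ∃ y, (rl' ++ [Sum.inr e]).head? = some y := by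
        cases rl' <;> exact ⟨_, rfl⟩
      obtain ⟨y, hy⟩ := h2
      have hU : (eamp G).undir c y := (List.isChain_cons.1 hchl).1 y (by simpa using hy)
      obtain ⟨x, _, hx, _, _⟩ := eampUndir_shape hU
      exact ⟨x, hb ▸ hx⟩
  have hlasts : ∀ b, (rl ++ (Sum.inr e) :: rr).getLast? = some b →
      ((Sum.inr e) :: rr).getLast? = some b := by
    intro b hb
    rw [List.getLast?_append, Option.or_of_isSome (by simp [List.getLast?_isSome])] at hb
    exact hb
  have hchs : List.Chain' (eamp G).undir (rl ++ (Sum.inr e) :: rr) := by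
    obtain ⟨hc1, _, hlink⟩ := List.isChain_append.1 (show List.Chain' (eamp G).undir (rl ++ [Sum.inr e]) from hchl)
    exact List.isChain_append.2 ⟨hc1, hchr, fun x hx y hy => by
      simp at hy; subst hy; exact hlink x hx _ (by simp)⟩
  refine hnon _ ⟨by simp, hchs, u', v', hl2, ?_, ?_, ?_⟩ (Sum.inr e) (by simp)
  · intro a b ha hb
    exact hmaxl a b ha (hheads b hb)
  · intro a b ha hb
    exact hmaxr a b (hlasts a ha) hb
  · rintro ⟨⟨A, hA, hdA⟩, -⟩
    have hsome : ∃ b, (rl ++ (Sum.inr e) :: rr).head? = some b := by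
      cases rl <;> exact ⟨_, rfl⟩
    obtain ⟨b, hb⟩ := hsome
    obtain ⟨x, rfl⟩ := hheadinr b hb
    exact eampDir_to_inr G A x (hdA _ hb)

/-! ### Pointwise characterization of LWF-open routes -/

theorem lwfOpen_eamp_iff {G : MixedGraph α} (D : Set (α ⊕ α)) (l : List (α ⊕ α)) :
    (eamp G).LWFOpenRoute D l ↔
      (eamp G).IsRoute l ∧ Hpt D l ∧ Lpt D l ∧ Tpt (eamp G).dir D l := by
  have hmaxinl : ∀ b : α, ∀ x, ¬ (eamp G).undir x (Sum.inl b) ∧ ¬ (eamp G).undir (Sum.inl b) x :=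
    fun b x => ⟨eampUndir_inl_right G x b, eampUndir_inl_left G b x⟩
  constructor
  · rintro ⟨hr, hcol, hnon⟩
    refine ⟨hr, ?_, ?_, ?_⟩
    · intro w hw
      obtain ⟨t, rfl⟩ : ∃ t, l = w :: t := by
        cases l with
        | nil => cases hw
        | cons a t => simp at hw; exact ⟨t, by rw [hw]⟩
      cases w with
      | inl b =>
        refine hnon _ (singleton_noncollider (eamp G) (u := []) (v := t) rfl ?_ (hmaxinl b))
          _ (by simp)
        rintro ⟨⟨A, hA, -⟩, -⟩; cases hA
      | inr e => exact eps_notin hnon (u := []) (v := t) rfl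
    · intro w hw
      obtain ⟨t, rfl⟩ := List.getLast?_eq_some_iff.1 hw
      cases w with
      | inl b =>
        refine hnon _ (singleton_noncollider (eamp G) (u := t) (v := []) (by simp) ?_ (hmaxinl b))
          _ (by simp)
        rintro ⟨-, ⟨C, hC, -⟩⟩; cases hC
      | inr e => exact eps_notin hnon (u := t) (v := []) (by simp)
    · intro A w C htr
      obtain ⟨u, v, hl, hA, hC⟩ := triple_decomp htr
      cases w with
      | inr e =>
        constructor
        · rintro ⟨hdA, -⟩; exact absurd hdA (eampDir_to_inr G A e)
        · intro hD; exact absurd hD (eps_notin hnon hl)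
      | inl b =>
        constructor
        · rintro ⟨hdA, hdC⟩
          have := hcol _ (singleton_collider (eamp G) hl hA hC hdA hdC (hmaxinl b))
          simpa using this
        · intro hD
          by_contra hboth
          refine (hnon _ (singleton_noncollider (eamp G) hl ?_ (hmaxinl b)) _ (by simp)) hD
          rintro ⟨⟨A', hA', hdA'⟩, ⟨C', hC', hdC'⟩⟩
          rw [hA] at hA'; rw [hC] at hC'
          cases hA'; cases hC'
          exact hboth ⟨hdA', hdC'⟩
  · rintro ⟨hr, hH, hL, hT⟩
    refine ⟨hr, ?_, ?_⟩
    · intro s hs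
      obtain ⟨b, u, v, A, C, rfl, hl, hA, hC, hdA, hdC⟩ := collider_shape_eamp hs
      obtain ⟨u₀, rfl⟩ := List.getLast?_eq_some_iff.1 hA
      obtain ⟨v₀, rfl⟩ : ∃ v₀, v = C :: v₀ := by
        cases v with
        | nil => cases hC
        | cons c v₀ => simp at hC; exact ⟨v₀, by rw [hC]⟩
      have htr : [A, Sum.inl b, C] <:+: l := ⟨u₀, v₀, by rw [hl]; simp⟩
      exact ⟨Sum.inl b, by simp, (hT A _ C htr).1 ⟨hdA, hdC⟩⟩
    · intro s hs x hx
      obtain ⟨hne, hch, u, v, hl, hm1, hm2, hno⟩ := hs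
      obtain ⟨s₁, s₂, rfl⟩ := List.append_of_mem hx
      cases x with
      | inr e =>
        have hl2 : l = (u ++ s₁) ++ [Sum.inr e] ++ (s₂ ++ v) := by rw [hl]; simp
        rcases decomp_cases hl2 with hw | hw | ⟨A, C, hA, hC, htr⟩
        · exact hH _ hw
        · exact hL _ hw
        · intro hD
          exact absurd ((hT A _ C htr).2 hD).1 (eampDir_to_inr G A e)
      | inl b =>
        have hs1 : s₁ = [] := by
          rcases s₁.eq_nil_or_concat with rfl | ⟨s₁', a, rfl⟩
          · rfl
          · exfalso
            rw [List.concat_eq_append] at hch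
            obtain ⟨-, -, hlink⟩ := List.isChain_append.1
              (show List.Chain' (eamp G).undir ((s₁' ++ [a]) ++ (Sum.inl b :: s₂)) from hch)
            exact eampUndir_inl_right G a b
              (hlink a (by simp [List.getLast?_concat]) _ rfl)
        have hs2 : s₂ = [] := by
          subst hs1
          cases s₂ with
          | nil => rfl
          | cons c s₂' =>
            exact absurd (List.isChain_cons_cons.1 hch).1 (eampUndir_inl_left G b c)
        subst hs1; subst hs2
        simp only [List.nil_append] at hl hm1 hm2 hno
        rcases decomp_cases hl with hw | hw | ⟨A, C, hA, hC, htr⟩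
        · exact hH _ hw
        · exact hL _ hw
        · intro hD
          have hboth := (hT A _ C htr).2 hD
          refine hno ⟨⟨A, hA, fun b' hb' => by simp at hb'; subst hb'; exact hboth.1⟩,
                     ⟨C, hC, fun b' hb' => by simp at hb'; subst hb'; exact hboth.2⟩⟩

theorem lwfOpen_dag_iff {G : MixedGraph α} (D : Set ((α ⊕ α) ⊕ Sym2 α))
    (l : List ((α ⊕ α) ⊕ Sym2 α)) :
    (dagOf G).LWFOpenRoute D l ↔
      (dagOf G).IsRoute l ∧ Hpt D l ∧ Lpt D l ∧ Tpt (dagOf G).dir D l := by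
  have hmax : ∀ w x : (α ⊕ α) ⊕ Sym2 α,
      ¬ (dagOf G).undir x w ∧ ¬ (dagOf G).undir w x := fun w x => ⟨fun h => h, fun h => h⟩
  constructor
  · rintro ⟨hr, hcol, hnon⟩
    refine ⟨hr, ?_, ?_, ?_⟩
    · intro w hw
      obtain ⟨t, rfl⟩ : ∃ t, l = w :: t := by
        cases l with
        | nil => cases hw
        | cons a t => simp at hw; exact ⟨t, by rw [hw]⟩
      refine hnon _ (singleton_noncollider (dagOf G) (u := []) (v := t) rfl ?_ (hmax w))
        _ (by simp)
      rintro ⟨⟨A, hA, -⟩, -⟩; cases hA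
    · intro w hw
      obtain ⟨t, rfl⟩ := List.getLast?_eq_some_iff.1 hw
      refine hnon _ (singleton_noncollider (dagOf G) (u := t) (v := []) (by simp) ?_ (hmax w))
        _ (by simp)
      rintro ⟨-, ⟨C, hC, -⟩⟩; cases hC
    · intro A w C htr
      obtain ⟨u, v, hl, hA, hC⟩ := triple_decomp htr
      constructor
      · rintro ⟨hdA, hdC⟩
        have := hcol _ (singleton_collider (dagOf G) hl hA hC hdA hdC (hmax w))
        simpa using this
      · intro hD
        by_contra hboth
        refine (hnon _ (singleton_noncollider (dagOf G) hl ?_ (hmax w)) _ (by simp)) hD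
        rintro ⟨⟨A', hA', hdA'⟩, ⟨C', hC', hdC'⟩⟩
        rw [hA] at hA'; rw [hC] at hC'
        cases hA'; cases hC'
        exact hboth ⟨hdA', hdC'⟩
  · rintro ⟨hr, hH, hL, hT⟩
    refine ⟨hr, ?_, ?_⟩
    · intro s hs
      obtain ⟨w, u, v, A, C, rfl, hl, hA, hC, hdA, hdC⟩ := collider_shape_dag hs
      obtain ⟨u₀, rfl⟩ := List.getLast?_eq_some_iff.1 hA
      obtain ⟨v₀, rfl⟩ : ∃ v₀, v = C :: v₀ := by
        cases v with
        | nil => cases hC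
        | cons c v₀ => simp at hC; exact ⟨v₀, by rw [hC]⟩
      have htr : [A, w, C] <:+: l := ⟨u₀, v₀, by rw [hl]; simp⟩
      exact ⟨w, by simp, (hT A w C htr).1 ⟨hdA, hdC⟩⟩
    · intro s hs x hx
      obtain ⟨w, u, v, rfl, hl, hno⟩ := noncollider_shape_dag hs
      simp at hx
      subst hx
      rcases decomp_cases hl with hw | hw | ⟨A, C, hA, hC, htr⟩
      · exact hH _ hw
      · exact hL _ hw
      · intro hD
        exact hno ⟨⟨A, hA, ((hT A _ C htr).2 hD).1⟩, ⟨C, hC, ((hT A _ C htr).2 hD).2⟩⟩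

/-! ### Determined sets -/

lemma dset_inl {G : MixedGraph α} {Z : Set (α ⊕ α)} {v : α ⊕ α}
    (h : MixedGraph.Determined (eampDet G) Z v) :
    MixedGraph.Determined (dagDet G) (Sum.inl '' Z ∪ selNodes G) (Sum.inl v) := by
  induction h with
  | base a ha => exact .base _ (Or.inl ⟨a, ha, rfl⟩)
  | step S a hSa hprem ih =>
    refine .step (Sum.inl '' S) (Sum.inl a) ⟨(S, a), hSa, rfl⟩ ?_
    rintro b ⟨b', hb', rfl⟩
    exact ih b' hb'

lemma dset_dag_shape {G : MixedGraph α} {Z : Set (α ⊕ α)} {w : (α ⊕ α) ⊕ Sym2 α}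
    (h : MixedGraph.Determined (dagDet G) (Sum.inl '' Z ∪ selNodes G) w) :
    (∃ v, w = Sum.inl v ∧ MixedGraph.Determined (eampDet G) Z v) ∨ w ∈ selNodes G := by
  induction h with
  | base a ha =>
    rcases ha with ⟨v, hv, rfl⟩ | ha
    · exact Or.inl ⟨v, rfl, .base v hv⟩
    · exact Or.inr ha
  | step S a hSa hprem ih =>
    obtain ⟨⟨q1, q2⟩, hq, heq⟩ := hSa
    obtain ⟨rfl, rfl⟩ := Prod.ext_iff.1 heq
    refine Or.inl ⟨q2, rfl, .step q1 q2 hq ?_⟩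
    intro b hb
    rcases ih (Sum.inl b) ⟨b, hb, rfl⟩ with ⟨v, hv, hdet⟩ | hsel
    · cases hv; exact hdet
    · obtain ⟨x, y, -, hxy⟩ := hsel
      cases hxy

lemma inl_mem_dset_iff {G : MixedGraph α} (Z : Set (α ⊕ α)) (v : α ⊕ α) :
    Sum.inl v ∈ MixedGraph.DSet (dagDet G) (Sum.inl '' Z ∪ selNodes G) ↔
      v ∈ MixedGraph.DSet (eampDet G) Z := by
  constructor
  · intro h
    rcases dset_dag_shape h with ⟨v', hv, hdet⟩ | hsel
    · cases hv; exact hdet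
    · obtain ⟨x, y, -, hxy⟩ := hsel
      cases hxy
  · exact dset_inl

lemma sel_mem_dset {G : MixedGraph α} (Z : Set (α ⊕ α)) {w : (α ⊕ α) ⊕ Sym2 α}
    (h : w ∈ selNodes G) :
    w ∈ MixedGraph.DSet (dagDet G) (Sum.inl '' Z ∪ selNodes G) :=
  .base _ (Or.inr h)

/-! ### The route transformation `fmap` from G' to G'' -/

/-- The selection node corresponding to an undirected edge. -/
def sel2 (a b : α ⊕ α) : Sym2 α := s(Sum.elim id id a, Sum.elim id id b)

open scoped Classical in
/-- Insert a selection node in the middle of every undirected edge of a route of G'. -/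
noncomputable def fmap (G : MixedGraph α) : List (α ⊕ α) → List ((α ⊕ α) ⊕ Sym2 α)
  | [] => []
  | [a] => [Sum.inl a]
  | a :: b :: t =>
    if (eamp G).undir a b then
      Sum.inl a :: Sum.inr (sel2 a b) :: fmap G (b :: t)
    else
      Sum.inl a :: fmap G (b :: t)

lemma fmap_nil (G : MixedGraph α) : fmap G ([] : List (α ⊕ α)) = [] := by rw [fmap]

lemma fmap_singleton (G : MixedGraph α) (a : α ⊕ α) : fmap G [a] = [Sum.inl a] := by rw [fmap]

lemma fmap_head (G : MixedGraph α) (l : List (α ⊕ α)) :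
    (fmap G l).head? = l.head?.map Sum.inl := by
  match l with
  | [] => rfl
  | [a] => rfl
  | a :: b :: t =>
    rw [fmap]
    split <;> rfl

lemma fmap_ne_nil (G : MixedGraph α) {l : List (α ⊕ α)} (h : l ≠ []) : fmap G l ≠ [] := by
  match l with
  | [a] => simp [fmap]
  | a :: b :: t =>
    rw [fmap]
    split <;> simp

lemma fmap_last (G : MixedGraph α) (l : List (α ⊕ α)) :
    (fmap G l).getLast? = l.getLast?.map Sum.inl := by
  match l with
  | [] => rfl
  | [a] => rfl
  | a :: b :: t =>
    have ih := fmap_last G (b :: t)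
    have hne : fmap G (b :: t) ≠ [] := fmap_ne_nil G (by simp)
    have hsome : (fmap G (b :: t)).getLast?.isSome := by
      rw [List.getLast?_isSome]; exact hne
    rw [fmap]
    split
    · show (([Sum.inl a, Sum.inr (sel2 a b)] : List _) ++ fmap G (b :: t)).getLast? = _
      rw [List.getLast?_append, Option.or_of_isSome hsome, ih, List.getLast?_cons_cons]
    · show (([Sum.inl a] : List _) ++ fmap G (b :: t)).getLast? = _
      rw [List.getLast?_append, Option.or_of_isSome hsome, ih, List.getLast?_cons_cons]

/-- Edges into an inserted selection node. -/
lemma sel_edges {G : MixedGraph α} {a b : α ⊕ α} (h : (eamp G).undir a b) :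
    (dagOf G).dir (Sum.inl a) (Sum.inr (sel2 a b)) ∧
    (dagOf G).dir (Sum.inl b) (Sum.inr (sel2 a b)) := by
  obtain ⟨x, y, rfl, rfl, hxy⟩ := eampUndir_shape h
  constructor
  · exact ⟨y, hxy, rfl⟩
  · exact ⟨x, G.undir_symm _ _ hxy, by rw [Sym2.eq_swap]; rfl⟩

lemma sel2_mem_selNodes {G : MixedGraph α} {a b : α ⊕ α} (h : (eamp G).undir a b) :
    (Sum.inr (sel2 a b) : (α ⊕ α) ⊕ Sym2 α) ∈ selNodes G := by
  obtain ⟨x, y, rfl, rfl, hxy⟩ := eampUndir_shape h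
  exact ⟨x, y, hxy, rfl⟩

lemma fmap_chain {G : MixedGraph α} {l : List (α ⊕ α)} (h : List.Chain' (eamp G).adj l) :
    List.Chain' (dagOf G).adj (fmap G l) := by
  match l with
  | [] => exact List.isChain_nil
  | [a] => exact List.isChain_singleton _
  | a :: b :: t =>
    have hab : (eamp G).adj a b := (List.isChain_cons_cons.1 h).1
    have ih := fmap_chain (l := b :: t) (List.isChain_cons.1 h).2
    have hhead : ∀ y, (fmap G (b :: t)).head? = some y → y = Sum.inl b := by
      intro y hy
      rw [fmap_head] at hy
      simpa using hy.symm
    rw [fmap]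
    split
    · next hu =>
      refine List.isChain_cons_cons.2 ⟨Or.inl (sel_edges hu).1, List.isChain_cons.2 ⟨?_, ih⟩⟩
      intro y hy
      rw [hhead y hy]
      exact Or.inr (Or.inl (sel_edges hu).2)
    · next hu =>
      refine List.isChain_cons.2 ⟨?_, ih⟩
      intro y hy
      rw [hhead y hy]
      rcases hab with hd | hd | hd
      · exact Or.inl ((dagDir_inl_inl a b).2 hd)
      · exact Or.inr (Or.inl ((dagDir_inl_inl b a).2 hd))
      · exact absurd hd hu

lemma triple_not_infix_short {A w C : β} {l : List β} (h : l.length ≤ 2) :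
    ¬ [A, w, C] <:+: l := fun hinf => by
  have := hinf.length_le
  simp at this
  omega

lemma fmap_T {G : MixedGraph α} {D' : Set (α ⊕ α)} {D'' : Set ((α ⊕ α) ⊕ Sym2 α)}
    (hinl : ∀ v, Sum.inl v ∈ D'' ↔ v ∈ D')
    (hsel : ∀ w ∈ selNodes G, w ∈ D'') :
    ∀ l : List (α ⊕ α), List.Chain' (eamp G).adj l → Tpt (eamp G).dir D' l →
      Tpt (dagOf G).dir D'' (fmap G l) := by
  intro l
  match l with
  | [] => intro _ _ A w C htr; exact absurd htr (triple_not_infix_short (by simp [fmap_nil]))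
  | [a] => intro _ _ A w C htr; exact absurd htr (triple_not_infix_short (by simp [fmap_singleton]))
  | a :: b :: t =>
    intro hch hT
    have hchtail : List.Chain' (eamp G).adj (b :: t) := (List.isChain_cons.1 hch).2
    have hTtail : Tpt (eamp G).dir D' (b :: t) := tpt_suffix hT (List.suffix_cons a _)
    have ih := fmap_T hinl hsel (b :: t) hchtail hTtail
    have hfhead : (fmap G (b :: t)).head? = some (Sum.inl b) := by
      rw [fmap_head]; rfl
    -- the second neighbour of `b` inside `fmap (b :: t)`, when it exists
    have hsecond : ∀ C₂ R, fmap G (b :: t) = Sum.inl b :: C₂ :: R →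
        ((∃ c t', t = c :: t' ∧ (eamp G).undir b c ∧ C₂ = Sum.inr (sel2 b c)) ∨
         (∃ c t', t = c :: t' ∧ ¬ (eamp G).undir b c ∧ C₂ = Sum.inl c)) := by
      intro C₂ R hR
      cases t with
      | nil => simp [fmap] at hR
      | cons c t' =>
        by_cases hbc : (eamp G).undir b c
        · rw [fmap, if_pos hbc] at hR
          exact Or.inl ⟨c, t', rfl, hbc, (by injection hR with h1 h2; injection h2 with h3 _; exact h3.symm)⟩
        · rw [fmap, if_neg hbc] at hR
          refine Or.inr ⟨c, t', rfl, hbc, ?_⟩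
          have : (fmap G (c :: t')).head? = some (Sum.inl c) := by rw [fmap_head]; rfl
          injection hR with h1 h2
          rw [h2] at this
          simpa using this
    -- interior fact: when `t = c :: t'`, middle node `b` obeys the G' triple rule
    have hbmid : ∀ c t', t = c :: t' → (((eamp G).dir a b ∧ (eamp G).dir c b) ↔ b ∈ D') := by
      intro c t' ht
      exact hT a b c ⟨[], t', by simp [ht]⟩
    intro A w C htr
    rw [fmap] at htr
    split at htr
    · next hu =>
      rcases List.infix_cons_iff.1 htr with hpre | htr2
      · obtain ⟨rfl, h2⟩ := List.cons_prefix_cons.1 hpre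
        obtain ⟨rfl, h3⟩ := List.cons_prefix_cons.1 h2
        have hC : C = Sum.inl b := by
          cases hF : fmap G (b :: t) with
          | nil => rw [hF] at h3; simpa using h3.length_le
          | cons c F' =>
            rw [hF] at h3
            have := (List.cons_prefix_cons.1 h3).1
            rw [hF] at hfhead
            simp at hfhead
            rw [this, hfhead]
        subst hC
        constructor
        · intro _; exact hsel _ (sel2_mem_selNodes hu)
        · intro _; exact ⟨(sel_edges hu).1, (sel_edges hu).2⟩
      · rcases List.infix_cons_iff.1 htr2 with hpre2 | htr3
        · obtain ⟨rfl, h2⟩ := List.cons_prefix_cons.1 hpre2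
          have hw : w = Sum.inl b := by
            cases hF : fmap G (b :: t) with
            | nil => rw [hF] at h2; simpa using h2.length_le
            | cons c F' =>
              rw [hF] at h2
              have := (List.cons_prefix_cons.1 h2).1
              rw [hF] at hfhead
              simp at hfhead
              rw [this, hfhead]
          subst hw
          obtain ⟨x, y, rfl, rfl, hxy⟩ := eampUndir_shape hu
          have hbD : Sum.inr y ∉ D' := by
            intro hD
            cases t with
            | nil =>
              rw [fmap] at h2
              have := h2.length_le
              simp at this
            | cons c t' =>
              exact absurd ((hbmid c t' rfl).2 hD).1 (eampDir_to_inr G _ y)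
          constructor
          · rintro ⟨hdA, -⟩; exact absurd hdA (dagDir_from_sel G _ _)
          · intro hD; exact absurd ((hinl _).1 hD) hbD
        · exact ih A w C htr3
    · next hu =>
      rcases List.infix_cons_iff.1 htr with hpre | htr2
      · obtain ⟨rfl, h2⟩ := List.cons_prefix_cons.1 hpre
        cases hF : fmap G (b :: t) with
        | nil => rw [hF] at h2; simpa using h2.length_le
        | cons w₀ F' =>
          rw [hF] at h2
          have hw : w₀ = Sum.inl b := by
            rw [hF] at hfhead; simpa using hfhead
          subst hw
          obtain ⟨rfl, h3⟩ := List.cons_prefix_cons.1 h2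
          cases F' with
          | nil => simpa using h3.length_le
          | cons C₂ R =>
            have hC : C = C₂ := (List.cons_prefix_cons.1 h3).1
            subst hC
            rcases hsecond _ _ hF with ⟨c, t', rfl, hbc, rfl⟩ | ⟨c, t', rfl, hbc, rfl⟩
            · obtain ⟨x, y, rfl, _, _⟩ := eampUndir_shape hbc
              have hbD : (Sum.inr x : α ⊕ α) ∉ D' := by
                intro hD
                exact absurd ((hbmid c t' rfl).2 hD).1 (eampDir_to_inr G _ x)
              constructor
              · rintro ⟨-, hdC⟩; exact absurd hdC (dagDir_from_sel G _ _)
              · intro hD; exact absurd ((hinl _).1 hD) hbD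
            · constructor
              · rintro ⟨hdA, hdC⟩
                exact (hinl _).2 ((hbmid c t' rfl).1
                  ⟨(dagDir_inl_inl a b).1 hdA, (dagDir_inl_inl c b).1 hdC⟩)
              · intro hD
                have := (hbmid c t' rfl).2 ((hinl _).1 hD)
                exact ⟨(dagDir_inl_inl a b).2 this.1, (dagDir_inl_inl c b).2 this.2⟩
      · exact ih A w C htr2

/-! ### Splitting triples across a decomposition -/

lemma prefix_singleton_shape {C : β} {X : List β} (h : [C] <+: X) : ∃ X2, X = C :: X2 := by
  cases X with
  | nil => simpa using h.length_le
  | cons c X2 =>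
    obtain ⟨rfl, -⟩ := List.cons_prefix_cons.1 h
    exact ⟨X2, rfl⟩

lemma triple_infix_split {A b C x : β} {u v : List β} (h : [A, b, C] <:+: u ++ x :: v) :
    [A, b, C] <:+: u ++ [x] ∨ [A, b, C] <:+: x :: v ∨
      (b = x ∧ (∃ u₀, u = u₀ ++ [A]) ∧ ∃ v₀, v = C :: v₀) := by
  induction u with
  | nil => exact Or.inr (Or.inl h)
  | cons d u1 ih =>
    rw [List.cons_append] at h
    rcases List.infix_cons_iff.1 h with hpre | hinf
    · obtain ⟨rfl, h2⟩ := List.cons_prefix_cons.1 hpre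
      cases u1 with
      | nil =>
        rw [List.nil_append] at h2
        obtain ⟨rfl, h3⟩ := List.cons_prefix_cons.1 h2
        obtain ⟨v₀, rfl⟩ := prefix_singleton_shape h3
        exact Or.inr (Or.inr ⟨rfl, ⟨[], rfl⟩, v₀, rfl⟩)
      | cons d₂ u2 =>
        rw [List.cons_append] at h2
        obtain ⟨rfl, h3⟩ := List.cons_prefix_cons.1 h2
        cases u2 with
        | nil =>
          have hC : C = x := by
            rw [List.nil_append] at h3
            obtain ⟨X2, hX⟩ := prefix_singleton_shape h3
            injection hX with h4 _
            exact h4.symm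
          exact Or.inl ⟨[], [], by simp [hC]⟩
        | cons d₃ u3 =>
          have hC : C = d₃ := by
            rw [List.cons_append] at h3
            obtain ⟨X2, hX⟩ := prefix_singleton_shape h3
            injection hX with h4 _
            exact h4.symm
          exact Or.inl ⟨[], u3 ++ [x], by simp [hC]⟩
    · rcases ih hinf with h1 | h2 | ⟨hb, ⟨u₀, hu⟩, hv⟩
      · exact Or.inl (h1.trans (List.suffix_cons d _).isInfix)
      · exact Or.inr (Or.inl h2)
      · exact Or.inr (Or.inr ⟨hb, ⟨d :: u₀, by rw [hu]; rfl⟩, hv⟩)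

/-! ### Collapsing degenerate selection-node visits -/

/-- `l` contains no subroute of the shape `ε^a → S ← ε^a`. -/
def NoPat (l : List ((α ⊕ α) ⊕ Sym2 α)) : Prop :=
  ∀ (u : List ((α ⊕ α) ⊕ Sym2 α)) (a : α) (s : Sym2 α) (v : List ((α ⊕ α) ⊕ Sym2 α)),
    l ≠ u ++ [Sum.inl (Sum.inr a), Sum.inr s, Sum.inl (Sum.inr a)] ++ v

lemma noPat_tail {w : (α ⊕ α) ⊕ Sym2 α} {l : List ((α ⊕ α) ⊕ Sym2 α)}
    (h : NoPat (w :: l)) : NoPat l := by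
  intro u a s v hl
  exact h (w :: u) a s v (by rw [hl]; rfl)

lemma collapse {G : MixedGraph α} {D'' : Set ((α ⊕ α) ⊕ Sym2 α)} :
    ∀ (n : ℕ) (l : List ((α ⊕ α) ⊕ Sym2 α)), l.length ≤ n →
      List.Chain' (dagOf G).adj l → Tpt (dagOf G).dir D'' l →
      ∃ m, List.Chain' (dagOf G).adj m ∧ Tpt (dagOf G).dir D'' m ∧
        m.head? = l.head? ∧ m.getLast? = l.getLast? ∧ NoPat m := by
  intro n
  induction n with
  | zero =>
    intro l hlen hch hT
    have : l = [] := List.length_eq_zero_iff.1 (Nat.le_zero.1 hlen)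
    subst this
    exact ⟨[], List.isChain_nil, hT, rfl, rfl, fun u a s v h => by simp at h⟩
  | succ n ih =>
    intro l hlen hch hT
    by_cases hp : ∃ (u : List ((α ⊕ α) ⊕ Sym2 α)) (a : α) (s : Sym2 α)
        (v : List ((α ⊕ α) ⊕ Sym2 α)),
        l = u ++ [Sum.inl (Sum.inr a), Sum.inr s, Sum.inl (Sum.inr a)] ++ v
    · obtain ⟨u, a, s, v, rfl⟩ := hp
      set e : (α ⊕ α) ⊕ Sym2 α := Sum.inl (Sum.inr a) with he
      have hlen2 : (u ++ e :: v).length ≤ n := by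
        simp at hlen ⊢
        omega
      have hch2 : List.Chain' (dagOf G).adj (u ++ e :: v) := by
        have h0 : u ++ [e, Sum.inr s, e] ++ v = u ++ (e :: Sum.inr s :: e :: v) := by simp
        rw [h0] at hch
        obtain ⟨hu, hv, hlink⟩ := List.isChain_append.1 hch
        refine List.isChain_append.2 ⟨hu, hv.tail.tail, ?_⟩
        intro x hx y hy
        simp at hy
        subst hy
        exact hlink x hx e rfl
      have hT2 : Tpt (dagOf G).dir D'' (u ++ e :: v) := by
        intro A w C htr
        rcases triple_infix_split htr with h1 | h2 | ⟨rfl, ⟨u₀, rfl⟩, v₀, rfl⟩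
        · refine tpt_infix hT (h1.trans ?_) A w C (List.infix_refl _)
          exact ⟨[], Sum.inr s :: e :: v, by simp⟩
        · refine tpt_infix hT (h2.trans ?_) A w C (List.infix_refl _)
          exact ⟨u ++ [e, Sum.inr s], [], by simp⟩
        · have heD : e ∉ D'' := by
            intro hD
            have htr2 : [A, e, Sum.inr s] <:+: (u₀ ++ [A]) ++ [e, Sum.inr s, e] ++ (C :: v₀) :=
              ⟨u₀, e :: C :: v₀, by simp⟩
            exact absurd ((hT A e (Sum.inr s) htr2).2 hD).1 (dagDir_to_eps G A a)
          constructor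
          · rintro ⟨hdA, -⟩; exact absurd hdA (dagDir_to_eps G A a)
          · intro hD; exact absurd hD heD
      obtain ⟨m, hm1, hm2, hm3, hm4, hm5⟩ := ih (u ++ e :: v) hlen2 hch2 hT2
      refine ⟨m, hm1, hm2, ?_, ?_, hm5⟩
      · rw [hm3]
        cases u <;> rfl
      · rw [hm4]
        rcases v.eq_nil_or_concat with rfl | ⟨v₀, z, hv⟩
        · have h1 : (u ++ e :: ([] : List ((α ⊕ α) ⊕ Sym2 α))).getLast? = some e := by
            rw [show u ++ e :: ([] : List ((α ⊕ α) ⊕ Sym2 α)) = u ++ [e] from rfl]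
            exact (List.getLast?_concat (l := u))
          have h2 : (u ++ [e, Sum.inr s, e] ++ ([] : List ((α ⊕ α) ⊕ Sym2 α))).getLast? = some e := by
            rw [List.append_nil, show u ++ [e, Sum.inr s, e] = (u ++ [e, Sum.inr s]) ++ [e] by simp]
            exact List.getLast?_concat
          rw [h1, h2]
        · rw [List.concat_eq_append] at hv
          subst hv
          have h1 : (u ++ e :: (v₀ ++ [z])).getLast? = some z := by
            rw [show u ++ e :: (v₀ ++ [z]) = (u ++ e :: v₀) ++ [z] by simp]
            exact List.getLast?_concat
          have h2 : (u ++ [e, Sum.inr s, e] ++ (v₀ ++ [z])).getLast? = some z := by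
            rw [show u ++ [e, Sum.inr s, e] ++ (v₀ ++ [z]) =
              (u ++ [e, Sum.inr s, e] ++ v₀) ++ [z] by simp]
            exact List.getLast?_concat
          rw [h1, h2]
    · exact ⟨l, hch, hT, rfl, rfl, fun u a s v h => hp ⟨u, a, s, v, h⟩⟩

/-! ### The route transformation `gmap` from G'' to G' -/

/-- Delete the selection nodes of a route of G''. -/
def gmap : List ((α ⊕ α) ⊕ Sym2 α) → List (α ⊕ α) :=
  List.filterMap (Sum.elim some fun _ => none)

@[simp] lemma gmap_nil : gmap ([] : List ((α ⊕ α) ⊕ Sym2 α)) = [] := rfl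

@[simp] lemma gmap_cons_inl (v : α ⊕ α) (r : List ((α ⊕ α) ⊕ Sym2 α)) :
    gmap (Sum.inl v :: r) = v :: gmap r := rfl

@[simp] lemma gmap_cons_inr (s : Sym2 α) (r : List ((α ⊕ α) ⊕ Sym2 α)) :
    gmap (Sum.inr s :: r) = gmap r := rfl

lemma gmap_head {l : List ((α ⊕ α) ⊕ Sym2 α)} {x : α ⊕ α}
    (h : l.head? = some (Sum.inl x)) : (gmap l).head? = some x := by
  cases l with
  | nil => cases h
  | cons w r =>
    simp at h
    subst h
    rfl

lemma gmap_last : ∀ (l : List ((α ⊕ α) ⊕ Sym2 α)) (y : α ⊕ α),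
    l.getLast? = some (Sum.inl y) → (gmap l).getLast? = some y := by
  intro l
  match l with
  | [] => intro y h; cases h
  | [w] =>
    intro y h
    simp at h
    subst h
    rfl
  | w :: b :: t =>
    intro y h
    rw [List.getLast?_cons_cons] at h
    have ih := gmap_last (b :: t) y h
    have hne : (gmap (b :: t)).getLast?.isSome := by rw [ih]; rfl
    cases w with
    | inl v =>
      rw [gmap_cons_inl, show v :: gmap (b :: t) = [v] ++ gmap (b :: t) from rfl,
        List.getLast?_append, Option.or_of_isSome hne]
      exact ih
    | inr s =>
      rw [gmap_cons_inr]
      exact ih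

/-! ### Adjacency shapes in G'' -/

lemma adj_dag_inl_sel {G : MixedGraph α} {u : α ⊕ α} {s : Sym2 α}
    (h : (dagOf G).adj (Sum.inl u) (Sum.inr s)) :
    ∃ x y, u = Sum.inr x ∧ G.undir x y ∧ s = s(x, y) := by
  rcases h with hd | hd | hd
  · cases u with
    | inl x => exact hd.elim
    | inr x =>
      obtain ⟨y, h1, h2⟩ := hd
      exact ⟨x, y, rfl, h1, h2⟩
  · exact absurd hd (dagDir_from_sel G s _)
  · exact hd.elim

lemma adj_dag_sel_inl {G : MixedGraph α} {u : α ⊕ α} {s : Sym2 α}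
    (h : (dagOf G).adj (Sum.inr s) (Sum.inl u)) :
    ∃ x y, u = Sum.inr x ∧ G.undir x y ∧ s = s(x, y) := by
  rcases h with hd | hd | hd
  · exact absurd hd (dagDir_from_sel G s _)
  · cases u with
    | inl x => exact hd.elim
    | inr x =>
      obtain ⟨y, h1, h2⟩ := hd
      exact ⟨x, y, rfl, h1, h2⟩
  · exact hd.elim

lemma adj_dag_sel_sel (G : MixedGraph α) {s s' : Sym2 α} :
    ¬ (dagOf G).adj (Sum.inr s) (Sum.inr s') := by
  rintro (hd | hd | hd)
  · exact dagDir_from_sel G s _ hd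
  · exact dagDir_from_sel G s' _ hd
  · exact hd

lemma adj_dag_inl_inl {G : MixedGraph α} {u v : α ⊕ α}
    (h : (dagOf G).adj (Sum.inl u) (Sum.inl v)) : (eamp G).adj u v := by
  rcases h with hd | hd | hd
  · exact Or.inl ((dagDir_inl_inl u v).1 hd)
  · exact Or.inr (Or.inl ((dagDir_inl_inl v u).1 hd))
  · exact hd.elim

lemma gmap_chain {G : MixedGraph α} :
    ∀ l : List ((α ⊕ α) ⊕ Sym2 α), List.Chain' (dagOf G).adj l → NoPat l →
      List.Chain' (eamp G).adj (gmap l) := by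
  intro l
  match l with
  | [] => intro _ _; exact List.isChain_nil
  | Sum.inr s :: r =>
    intro hch hnp
    rw [gmap_cons_inr]
    exact gmap_chain r hch.tail (noPat_tail hnp)
  | Sum.inl v :: r =>
    intro hch hnp
    have ih := gmap_chain r hch.tail (noPat_tail hnp)
    rw [gmap_cons_inl]
    refine List.isChain_cons.2 ⟨?_, ih⟩
    intro y hy
    cases r with
    | nil => simp at hy
    | cons w₂ r₂ =>
      have hadj : (dagOf G).adj (Sum.inl v) w₂ := (List.isChain_cons_cons.1 hch).1
      cases w₂ with
      | inl v₂ =>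
        have hyv : v₂ = y := by simpa using hy
        subst hyv
        exact adj_dag_inl_inl hadj
      | inr s₂ =>
        obtain ⟨x, y₀, rfl, hud, hs⟩ := adj_dag_inl_sel hadj
        cases r₂ with
        | nil => simp at hy
        | cons w₃ r₃ =>
          have hadj2 : (dagOf G).adj (Sum.inr s₂) w₃ := (List.isChain_cons_cons.1 hch.tail).1
          cases w₃ with
          | inr s₃ => exact absurd hadj2 (adj_dag_sel_sel G)
          | inl v₃ =>
            obtain ⟨b₀, y₁, rfl, hud2, hs2⟩ := adj_dag_sel_inl hadj2
            have hyb : Sum.inr b₀ = y := by simpa using hy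
            subst hyb
            rw [hs] at hs2
            rcases Sym2.eq_iff.1 hs2.symm with ⟨h1, h2⟩ | ⟨h1, h2⟩
            · exfalso
              refine hnp [] x s₂ r₃ ?_
              rw [h1]
              rfl
            · refine Or.inr (Or.inr ?_)
              show G.undir x b₀
              have hx : G.undir b₀ x := by rw [← h2]; exact hud2
              exact G.undir_symm _ _ hx

lemma gmap_T {G : MixedGraph α} {D' : Set (α ⊕ α)} {D'' : Set ((α ⊕ α) ⊕ Sym2 α)}
    (hinl : ∀ v, Sum.inl v ∈ D'' ↔ v ∈ D') :
    ∀ l : List ((α ⊕ α) ⊕ Sym2 α), List.Chain' (dagOf G).adj l → NoPat l →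
      Tpt (dagOf G).dir D'' l → Tpt (eamp G).dir D' (gmap l) := by
  intro l
  match l with
  | [] => intro _ _ _ A w C htr; exact absurd htr (triple_not_infix_short (by simp))
  | Sum.inr s :: r =>
    intro hch hnp hT
    rw [gmap_cons_inr]
    exact gmap_T hinl r hch.tail (noPat_tail hnp) (tpt_suffix hT (List.suffix_cons _ _))
  | Sum.inl v :: r =>
    intro hch hnp hT
    have ih := gmap_T hinl r hch.tail (noPat_tail hnp) (tpt_suffix hT (List.suffix_cons _ _))
    intro A w C htr
    rw [gmap_cons_inl] at htr
    rcases List.infix_cons_iff.1 htr with hpre | hinf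
    · obtain ⟨rfl, h2⟩ := List.cons_prefix_cons.1 hpre
      cases r with
      | nil => rw [gmap_nil] at h2; simpa using h2.length_le
      | cons w₂ r₂ =>
        cases w₂ with
        | inl v₂ =>
          rw [gmap_cons_inl] at h2
          obtain ⟨rfl, h3⟩ := List.cons_prefix_cons.1 h2
          cases r₂ with
          | nil => rw [gmap_nil] at h3; simpa using h3.length_le
          | cons w₃ r₃ =>
            cases w₃ with
            | inl v₃ =>
              rw [gmap_cons_inl] at h3
              obtain ⟨X2, hX⟩ := prefix_singleton_shape h3
              have hC : C = v₃ := by injection hX with h4 _; exact h4.symm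
              subst hC
              have hmid := hT (Sum.inl A) (Sum.inl w) (Sum.inl C) ⟨[], r₃, by simp⟩
              constructor
              · rintro ⟨h5, h6⟩
                exact (hinl _).1 (hmid.1
                  ⟨(dagDir_inl_inl A w).2 h5, (dagDir_inl_inl C w).2 h6⟩)
              · intro hD
                obtain ⟨h5, h6⟩ := hmid.2 ((hinl _).2 hD)
                exact ⟨(dagDir_inl_inl A w).1 h5, (dagDir_inl_inl C w).1 h6⟩
            | inr s₃ =>
              have hadj2 : (dagOf G).adj (Sum.inl w) (Sum.inr s₃) :=
                (List.isChain_cons_cons.1 hch.tail).1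
              obtain ⟨b₀, y₀, rfl, -, -⟩ := adj_dag_inl_sel hadj2
              have hv2 : Sum.inl (Sum.inr b₀ : α ⊕ α) ∉ D'' := by
                have hmid := hT (Sum.inl A) (Sum.inl (Sum.inr b₀)) (Sum.inr s₃)
                  ⟨[], r₃, by simp⟩
                intro hD
                exact absurd (hmid.2 hD).2 (dagDir_from_sel G s₃ _)
              constructor
              · rintro ⟨-, h6⟩; exact absurd h6 (eampDir_to_inr G C b₀)
              · intro hD; exact absurd ((hinl _).2 hD) hv2
        | inr s₂ =>
          rw [gmap_cons_inr] at h2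
          cases r₂ with
          | nil => rw [gmap_nil] at h2; simpa using h2.length_le
          | cons w₃ r₃ =>
            have hadj2 : (dagOf G).adj (Sum.inr s₂) w₃ := (List.isChain_cons_cons.1 hch.tail).1
            cases w₃ with
            | inr s₃ => exact absurd hadj2 (adj_dag_sel_sel G)
            | inl v₃ =>
              obtain ⟨b₀, y₁, rfl, -, -⟩ := adj_dag_sel_inl hadj2
              rw [gmap_cons_inl] at h2
              obtain ⟨rfl, h3⟩ := List.cons_prefix_cons.1 h2
              obtain ⟨X2, hX⟩ := prefix_singleton_shape h3
              obtain ⟨w₄, r₄, rfl⟩ : ∃ w₄ r₄, r₃ = w₄ :: r₄ := by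
                cases r₃ with
                | nil => rw [gmap_nil] at hX; cases hX
                | cons w₄ r₄ => exact ⟨w₄, r₄, rfl⟩
              have hv3 : Sum.inl (Sum.inr b₀ : α ⊕ α) ∉ D'' := by
                have hmid := hT (Sum.inr s₂) (Sum.inl (Sum.inr b₀)) w₄
                  ⟨[Sum.inl A], r₄, by simp⟩
                intro hD
                exact absurd (hmid.2 hD).1 (dagDir_from_sel G s₂ _)
              constructor
              · rintro ⟨h5, -⟩; exact absurd h5 (eampDir_to_inr G A b₀)
              · intro hD; exact absurd ((hinl _).2 hD) hv3
    · exact ih A w C hinf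

end Aux

/-- Theorem 3: `I_LWF(G') = [I_LWF(G'')]^S`: for all disjoint
`X, Y, Z ⊆ V ∪ ε`, X is LWF-separated from Y given Z in G' iff X is
LWF-separated from Y given `Z ∪ S` in G'' (with the same deterministic
relationships). -/
theorem stmt9 {α : Type*} (G : MixedGraph α) (hG : G.IsChainGraph)
    (X Y Z : Set (α ⊕ α)) (hXY : Disjoint X Y) (hXZ : Disjoint X Z) (hYZ : Disjoint Y Z) :
    (eamp G).LWFSep (MixedGraph.DSet (eampDet G) Z) X Y ↔
      (dagOf G).LWFSep
        (MixedGraph.DSet (dagDet G) (Sum.inl '' Z ∪ selNodes G))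
        (Sum.inl '' X) (Sum.inl '' Y) := by
  have hinl : ∀ v, Sum.inl v ∈ MixedGraph.DSet (dagDet G) (Sum.inl '' Z ∪ selNodes G) ↔
      v ∈ MixedGraph.DSet (eampDet G) Z := fun v => inl_mem_dset_iff Z v
  constructor
  · intro hsep l'' x'' y'' hx hy hhead hlast hopen
    obtain ⟨x, hxX, rfl⟩ := hx
    obtain ⟨y, hyY, rfl⟩ := hy
    rw [lwfOpen_dag_iff] at hopen
    obtain ⟨⟨hne, hch⟩, hH, hL, hT⟩ := hopen
    obtain ⟨m, hmch, hmT, hmhead, hmlast, hmnp⟩ := collapse l''.length l'' le_rfl hch hT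
    have hmh : m.head? = some (Sum.inl x) := by rw [hmhead, hhead]
    have hml : m.getLast? = some (Sum.inl y) := by rw [hmlast, hlast]
    have hgh : (gmap m).head? = some x := gmap_head hmh
    have hgl : (gmap m).getLast? = some y := gmap_last m y hml
    refine hsep (gmap m) x y hxX hyY hgh hgl ?_
    rw [lwfOpen_eamp_iff]
    refine ⟨⟨?_, gmap_chain m hmch hmnp⟩, ?_, ?_, gmap_T hinl m hmch hmnp hmT⟩
    · intro h0
      rw [h0] at hgh
      cases hgh
    · intro w hw hD
      rw [hgh] at hw
      injection hw with hw
      subst hw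
      exact hH _ hhead ((hinl x).2 hD)
    · intro w hw hD
      rw [hgl] at hw
      injection hw with hw
      subst hw
      exact hL _ hlast ((hinl y).2 hD)
  · intro hsep l x y hxX hyY hhead hlast hopen
    rw [lwfOpen_eamp_iff] at hopen
    obtain ⟨⟨hne, hch⟩, hH, hL, hT⟩ := hopen
    refine hsep (fmap G l) (Sum.inl x) (Sum.inl y) ⟨x, hxX, rfl⟩ ⟨y, hyY, rfl⟩
      (by rw [fmap_head, hhead]; rfl) (by rw [fmap_last, hlast]; rfl) ?_
    rw [lwfOpen_dag_iff]
    refine ⟨⟨fmap_ne_nil G hne, fmap_chain hch⟩, ?_, ?_,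
      fmap_T hinl (fun w hw => sel_mem_dset Z hw) l hch hT⟩
    · intro w hw hD
      rw [fmap_head, hhead] at hw
      injection hw with hw
      subst hw
      exact hH x hhead ((hinl x).1 hD)
    · intro w hw hD
      rw [fmap_last, hlast] at hw
      injection hw with hw
      subst hw
      exact hL y hlast ((hinl y).1 hD)
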